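/- Let ξ ⪯ ζ be probability measures on ℕ and k ∈ ℕ. Then the measures ξ ⋄_j ζ for j = 0,...,k form a decreasing chain in the stochastic order: ζ = ξ ⋄_0 ζ ⪰ ξ ⋄_1 ζ ⪰ ... ⪰ ξ ⋄_k ζ ⪰ ξ. -/

import Mathlib

open MeasureTheory

/-- Stochastic dominance: `ξ ⪯ ζ` iff `ξ([0,n]) ≥ ζ([0,n])` for all `n`. -/
def StochDom (ξ ζ : Measure ℕ) : Prop := ∀ n : ℕ, ζ (Set.Iic n) ≤ ξ (Set.Iic n)

/-- Partial dominance `ξ ⪯_l ζ` : `ξ([0,n]) ≥ ζ([0,n])` for all `n ≤ l`. -/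
def StochDomUpTo (l : ℕ) (ξ ζ : Measure ℕ) : Prop :=
  ∀ n ≤ l, ζ (Set.Iic n) ≤ ξ (Set.Iic n)

/-- `η` is the measure `ξ ⋄_k ζ`: it is a probability measure dominated by `ζ`, agreeing
with `ξ` on `[0,k-1]`, and for some `K ≥ k` its tails above `K` agree with those of `ζ`
while it vanishes on `{k,...,K-1}`. -/
def IsDiamond (ξ ζ : Measure ℕ) (k : ℕ) (η : Measure ℕ) : Prop :=
  IsProbabilityMeasure η ∧ StochDom η ζ ∧
  (∀ n < k, η (Set.Iic n) = ξ (Set.Iic n)) ∧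
  ∃ K ≥ k, (∀ n > K, η (Set.Ici n) = ζ (Set.Ici n)) ∧ η (Set.Ico k K) = 0

lemma compl_Ici_nat (n : ℕ) : (Set.Ici (n+1))ᶜ = Set.Iic n := by
  ext x; simp [Nat.lt_succ_iff]

lemma Iic_eq_of_tail {η ζ : Measure ℕ} [IsProbabilityMeasure η] [IsProbabilityMeasure ζ]
    {n : ℕ} (h : η (Set.Ici (n+1)) = ζ (Set.Ici (n+1))) :
    η (Set.Iic n) = ζ (Set.Iic n) := by
  rw [← compl_Ici_nat n, prob_compl_eq_one_sub measurableSet_Ici,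
    prob_compl_eq_one_sub measurableSet_Ici, h]

lemma measure_Iic_eq_of_vanish {η : Measure ℕ} {j K n : ℕ} (hjn : j ≤ n) (hnK : n < K)
    (h0 : η (Set.Ico j K) = 0) : η (Set.Iic n) = η (Set.Iio j) := by
  apply le_antisymm
  · have hsub : Set.Iic n ⊆ Set.Iio j ∪ Set.Ico j K := by
      intro x hx
      simp only [Set.mem_Iic] at hx
      rcases lt_or_ge x j with h | h
      · exact Or.inl h
      · exact Or.inr ⟨h, lt_of_le_of_lt hx hnK⟩
    calc η (Set.Iic n) ≤ η (Set.Iio j ∪ Set.Ico j K) := measure_mono hsub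
      _ ≤ η (Set.Iio j) + η (Set.Ico j K) := measure_union_le _ _
      _ = η (Set.Iio j) := by rw [h0, add_zero]
  · exact measure_mono fun x hx => le_of_lt (lt_of_lt_of_le hx hjn)

lemma ext_of_Iic_nat {η ζ : Measure ℕ} [IsProbabilityMeasure η]
    (h : ∀ n, η (Set.Iic n) = ζ (Set.Iic n)) : η = ζ := by
  apply MeasureTheory.Measure.ext_of_singleton
  intro a
  cases a with
  | zero =>
    have h0 : ({0} : Set ℕ) = Set.Iic 0 := by ext x; simp [Nat.le_zero]
    rw [h0]; exact h 0
  | succ n =>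
    have hset : ({n+1} : Set ℕ) = Set.Iic (n+1) \ Set.Iic n := by
      ext x
      simp only [Set.mem_singleton_iff, Set.mem_diff, Set.mem_Iic, not_le]
      omega
    have hsub : Set.Iic n ⊆ Set.Iic (n+1) :=
      Set.Iic_subset_Iic.mpr (Nat.le_succ n)
    have hfin1 : η (Set.Iic n) ≠ ⊤ := measure_ne_top η _
    have hfin2 : ζ (Set.Iic n) ≠ ⊤ := by rw [← h n]; exact measure_ne_top η _
    rw [hset, measure_diff hsub (measurableSet_Iic).nullMeasurableSet hfin1,
      measure_diff hsub (measurableSet_Iic).nullMeasurableSet hfin2, h n, h (n+1)]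


/-- The measures `ξ ⋄_j ζ`, `j = 0,...,k`, form a decreasing chain in the stochastic
order: `ζ = ξ ⋄_0 ζ ⪰ ξ ⋄_1 ζ ⪰ ... ⪰ ξ ⋄_k ζ ⪰ ξ`. -/
theorem diamond_chain (ξ ζ : Measure ℕ) [IsProbabilityMeasure ξ] [IsProbabilityMeasure ζ]
    (hξζ : StochDom ξ ζ) (k : ℕ) (η : ℕ → Measure ℕ)
    (hη : ∀ j ≤ k, IsDiamond ξ ζ j (η j)) :
    η 0 = ζ ∧ (∀ j < k, StochDom (η (j + 1)) (η j)) ∧ (∀ j ≤ k, StochDom ξ (η j)) := by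
  -- key facts from IsDiamond
  have tail_eq : ∀ j ≤ k, ∀ K, (∀ n > K, η j (Set.Ici n) = ζ (Set.Ici n)) →
      ∀ n ≥ K, η j (Set.Iic n) = ζ (Set.Iic n) := by
    intro j hj K hK n hn
    have hP : IsProbabilityMeasure (η j) := (hη j hj).1
    exact Iic_eq_of_tail (hK (n+1) (Nat.lt_succ_of_le hn))
  refine ⟨?_, ?_, ?_⟩
  · -- η 0 = ζ
    obtain ⟨hP0, hdom0, -, K, -, htail, hvan⟩ := hη 0 (Nat.zero_le k)
    have : ∀ n, η 0 (Set.Iic n) = ζ (Set.Iic n) := by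
      intro n
      rcases lt_or_ge n K with hn | hn
      · have h1 : η 0 (Set.Iic n) = 0 := by
          rw [measure_Iic_eq_of_vanish (Nat.zero_le n) hn hvan,
            show (Set.Iio 0 : Set ℕ) = ∅ by ext x; simp]
          simp
        have h2 : ζ (Set.Iic n) ≤ η 0 (Set.Iic n) := hdom0 n
        rw [h1] at h2 ⊢
        exact (le_antisymm h2 zero_le).symm
      · exact tail_eq 0 (Nat.zero_le k) K htail n hn
    exact ext_of_Iic_nat this
  · -- decreasing chain
    intro j hj n
    obtain ⟨hPj, hdomj, hagreej, K', hK'j, htailj, hvanj⟩ := hη j (le_of_lt hj)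
    obtain ⟨hPj1, hdomj1, hagreej1, K, hKj1, htailj1, hvanj1⟩ := hη (j+1) hj
    rcases lt_or_ge n j with hn | hn
    · -- n < j : both agree with ξ
      rw [hagreej n hn, hagreej1 n (lt_trans hn (Nat.lt_succ_self j))]
    rcases lt_or_ge n K' with hnK' | hnK'
    · -- j ≤ n < K'
      rw [measure_Iic_eq_of_vanish hn hnK' hvanj]
      cases j with
      | zero =>
        rw [show (Set.Iio 0 : Set ℕ) = ∅ by ext x; simp]
        simp
      | succ m =>
        have : Set.Iio (m+1) = Set.Iic m := by ext x; simp [Nat.lt_succ_iff]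
        rw [this, hagreej m (Nat.lt_succ_self m), ← hagreej1 m (by omega)]
        exact measure_mono (Set.Iic_subset_Iic.mpr (by omega))
    · -- n ≥ K'
      rw [tail_eq j (le_of_lt hj) K' htailj n hnK']
      exact hdomj1 n
  · -- ξ dominates each η j
    intro j hj n
    obtain ⟨hPj, hdomj, hagreej, K', hK'j, htailj, hvanj⟩ := hη j hj
    rcases lt_or_ge n j with hn | hn
    · rw [hagreej n hn]
    rcases lt_or_ge n K' with hnK' | hnK'
    · rw [measure_Iic_eq_of_vanish hn hnK' hvanj]
      cases j with
      | zero =>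
        rw [show (Set.Iio 0 : Set ℕ) = ∅ by ext x; simp]
        simp
      | succ m =>
        have : Set.Iio (m+1) = Set.Iic m := by ext x; simp [Nat.lt_succ_iff]
        rw [this, hagreej m (Nat.lt_succ_self m)]
        exact measure_mono (Set.Iic_subset_Iic.mpr (by omega))
    · rw [tail_eq j hj K' htailj n hnK']
      exact hξζ n
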